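/- Let A' be a commutative ring, J' ⊆ A' an ideal, B' := A'/J' with quotient map g : A' → B', let f : B → B' be a homomorphism of commutative rings, and let A := B ×_{B'} A' be the fiber product ring with projections pr₁ : A → B and pr₂ : A → A'. Then: (i) pr₁ is surjective and its kernel J consists exactly of the pairs (0, a') with a' ∈ J'; (ii) the image of J under pr₂ equals J'; and (iii) regarding B and A' as A-algebras via pr₁ and pr₂ respectively, the natural ring homomorphism B ⊗_A A' → B' sending b ⊗ a' to f(b)·g(a') is an isomorphism. -/

import Mathlib

open scoped TensorProduct

/-- The fiber product ring `B ×_{B'} A'` of two ring homomorphisms `f : B →+* B'` and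
`g : A' →+* B'`, realized as the subring `{(b, a') | f b = g a'}` of `B × A'`. -/
def fiberProd {B A' B' : Type*} [CommRing B] [CommRing A'] [CommRing B']
    (f : B →+* B') (g : A' →+* B') : Subring (B × A') :=
  RingHom.eqLocus (f.comp (RingHom.fst B A')) (g.comp (RingHom.snd B A'))

/-- The first projection `pr₁ : B ×_{B'} A' →+* B`. -/
def fiberProdFst {B A' B' : Type*} [CommRing B] [CommRing A'] [CommRing B']
    (f : B →+* B') (g : A' →+* B') : fiberProd f g →+* B :=
  (RingHom.fst B A').comp (fiberProd f g).subtype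

/-- The second projection `pr₂ : B ×_{B'} A' →+* A'`. -/
def fiberProdSnd {B A' B' : Type*} [CommRing B] [CommRing A'] [CommRing B']
    (f : B →+* B') (g : A' →+* B') : fiberProd f g →+* A' :=
  (RingHom.snd B A').comp (fiberProd f g).subtype

section Aux

variable {B A' : Type*} [CommRing B] [CommRing A'] (J' : Ideal A') (f : B →+* A' ⧸ J')

lemma fiberProd_mem_iff (x : B × A') :
    x ∈ fiberProd f (Ideal.Quotient.mk J') ↔ f x.1 = Ideal.Quotient.mk J' x.2 := Iff.rfl

local notation "AA" => fiberProd f (Ideal.Quotient.mk J')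

set_option maxHeartbeats 1000000 in
lemma aux_part3 :
    letI : Algebra (fiberProd f (Ideal.Quotient.mk J')) B :=
        (fiberProdFst f (Ideal.Quotient.mk J')).toAlgebra;
      letI : Algebra (fiberProd f (Ideal.Quotient.mk J')) A' :=
        (fiberProdSnd f (Ideal.Quotient.mk J')).toAlgebra;
      ∃ e : (B ⊗[↥(fiberProd f (Ideal.Quotient.mk J'))] A') ≃+* A' ⧸ J',
        ∀ (b : B) (a' : A'), e (b ⊗ₜ a') = f b * Ideal.Quotient.mk J' a' := by
  letI : Algebra AA B := (fiberProdFst f (Ideal.Quotient.mk J')).toAlgebra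
  letI : Algebra AA A' := (fiberProdSnd f (Ideal.Quotient.mk J')).toAlgebra
  letI : Algebra AA (A' ⧸ J') :=
      ((Ideal.Quotient.mk J').comp (fiberProdSnd f (Ideal.Quotient.mk J'))).toAlgebra
  have halgB : ∀ x : AA, algebraMap AA B x = (x : B × A').1 := fun x => rfl
  have halgA' : ∀ x : AA, algebraMap AA A' x = (x : B × A').2 := fun x => rfl
  have halgQ : ∀ x : AA, algebraMap AA (A' ⧸ J') x = Ideal.Quotient.mk J' (x : B × A').2 :=
    fun x => rfl
  -- `f` as an `A`-algebra hom
  let fA : B →ₐ[AA] A' ⧸ J' :=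
    { toRingHom := f, commutes' := fun x => by rw [halgB, halgQ]; exact x.2 }
  let gA : A' →ₐ[AA] A' ⧸ J' :=
    { toRingHom := Ideal.Quotient.mk J', commutes' := fun x => by rw [halgA', halgQ]; rfl }
  let φ : (B ⊗[AA] A') →ₐ[AA] A' ⧸ J' := Algebra.TensorProduct.productMap fA gA
  have hφ : ∀ (b : B) (a' : A'), φ (b ⊗ₜ a') = f b * Ideal.Quotient.mk J' a' := fun b a' => by
    simp only [φ, Algebra.TensorProduct.productMap_apply_tmul]; rfl
  -- the key exchange identity
  have key : ∀ x : AA, (1 : B) ⊗ₜ[AA] ((x : B × A').2) = ((x : B × A').1) ⊗ₜ[AA] (1 : A') := by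
    intro x
    rw [← halgA' x, ← halgB x, ← Algebra.TensorProduct.algebraMap_apply',
      ← Algebra.TensorProduct.algebraMap_apply]
  have hker : ∀ a' ∈ J',
      (Algebra.TensorProduct.includeRight : A' →ₐ[AA] B ⊗[AA] A').toRingHom a' = 0 := by
    intro a' ha'
    have hx : ((0 : B), a') ∈ AA := by
      rw [fiberProd_mem_iff]
      simp [(Ideal.Quotient.eq_zero_iff_mem).2 ha']
    calc (Algebra.TensorProduct.includeRight : A' →ₐ[AA] B ⊗[AA] A').toRingHom a'
        = (1 : B) ⊗ₜ[AA] a' := rfl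
      _ = (0 : B) ⊗ₜ[AA] (1 : A') := key ⟨((0 : B), a'), hx⟩
      _ = 0 := TensorProduct.zero_tmul _ _
  let ψ : A' ⧸ J' →+* B ⊗[AA] A' :=
    Ideal.Quotient.lift J'
      (Algebra.TensorProduct.includeRight : A' →ₐ[AA] B ⊗[AA] A').toRingHom hker
  have hψ : ∀ a' : A', ψ (Ideal.Quotient.mk J' a') = (1 : B) ⊗ₜ[AA] a' := fun a' => rfl
  have hright : ∀ y : A' ⧸ J', φ (ψ y) = y := by
    intro y
    obtain ⟨a', rfl⟩ := Ideal.Quotient.mk_surjective y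
    rw [hψ, hφ, f.map_one, one_mul]
  have hleft : ∀ z : B ⊗[AA] A', ψ (φ z) = z := by
    intro z
    induction z using TensorProduct.induction_on with
    | zero => rw [map_zero φ, ψ.map_zero]
    | tmul b a' =>
      rw [hφ, ψ.map_mul, hψ]
      obtain ⟨c, hc⟩ := Ideal.Quotient.mk_surjective (f b)
      have hx : (b, c) ∈ AA := by rw [fiberProd_mem_iff]; exact hc.symm
      rw [← hc, hψ]
      calc ((1 : B) ⊗ₜ[AA] c) * ((1 : B) ⊗ₜ[AA] a')
          = (b ⊗ₜ[AA] (1 : A')) * ((1 : B) ⊗ₜ[AA] a') := by rw [key ⟨(b, c), hx⟩]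
        _ = b ⊗ₜ[AA] a' := by rw [Algebra.TensorProduct.tmul_mul_tmul, mul_one, one_mul]
    | add u v hu hv => rw [map_add φ, ψ.map_add, hu, hv]
  exact ⟨{ toFun := φ, invFun := ψ, left_inv := hleft, right_inv := hright,
           map_mul' := map_mul φ, map_add' := map_add φ }, hφ⟩

end Aux

theorem stmt0 {B A' : Type*} [CommRing B] [CommRing A'] (J' : Ideal A')
    (f : B →+* A' ⧸ J') :
    -- (i) `pr₁` is surjective, with kernel exactly the pairs `(0, a')` with `a' ∈ J'`
    Function.Surjective (fiberProdFst f (Ideal.Quotient.mk J')) ∧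
    (∀ x : fiberProd f (Ideal.Quotient.mk J'),
      x ∈ RingHom.ker (fiberProdFst f (Ideal.Quotient.mk J')) ↔
        (x : B × A').1 = 0 ∧ (x : B × A').2 ∈ J') ∧
    -- (ii) the image of `J = ker pr₁` under `pr₂` is `J'`
    (⇑(fiberProdSnd f (Ideal.Quotient.mk J')) ''
        (RingHom.ker (fiberProdFst f (Ideal.Quotient.mk J')) : Set
          (fiberProd f (Ideal.Quotient.mk J'))) = (J' : Set A')) ∧
    -- (iii) the natural map `B ⊗_A A' → B'`, `b ⊗ a' ↦ f(b) · g(a')`, is an isomorphism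
    (letI : Algebra (fiberProd f (Ideal.Quotient.mk J')) B :=
        (fiberProdFst f (Ideal.Quotient.mk J')).toAlgebra;
      letI : Algebra (fiberProd f (Ideal.Quotient.mk J')) A' :=
        (fiberProdSnd f (Ideal.Quotient.mk J')).toAlgebra;
      ∃ e : (B ⊗[↥(fiberProd f (Ideal.Quotient.mk J'))] A') ≃+* A' ⧸ J',
        ∀ (b : B) (a' : A'), e (b ⊗ₜ a') = f b * Ideal.Quotient.mk J' a') := by
  have hkeriff : ∀ x : fiberProd f (Ideal.Quotient.mk J'),
      x ∈ RingHom.ker (fiberProdFst f (Ideal.Quotient.mk J')) ↔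
        (x : B × A').1 = 0 ∧ (x : B × A').2 ∈ J' := by
    intro x
    constructor
    · intro hx
      have h1 : (x : B × A').1 = 0 := hx
      have h2 := x.2
      rw [fiberProd_mem_iff] at h2
      rw [h1, map_zero] at h2
      exact ⟨h1, (Ideal.Quotient.eq_zero_iff_mem).1 h2.symm⟩
    · intro ⟨h1, _⟩
      exact h1
  refine ⟨?_, hkeriff, ?_, aux_part3 J' f⟩
  · intro b
    obtain ⟨a', ha'⟩ := Ideal.Quotient.mk_surjective (f b)
    exact ⟨⟨(b, a'), ha'.symm⟩, rfl⟩
  · ext a'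
    simp only [Set.mem_image, SetLike.mem_coe]
    constructor
    · rintro ⟨x, hx, rfl⟩
      exact ((hkeriff x).1 hx).2
    · intro ha'
      have hx : ((0 : B), a') ∈ fiberProd f (Ideal.Quotient.mk J') := by
        rw [fiberProd_mem_iff]
        simp [(Ideal.Quotient.eq_zero_iff_mem).2 ha']
      exact ⟨⟨((0 : B), a'), hx⟩, (hkeriff _).2 ⟨rfl, ha'⟩, rfl⟩
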